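/- A quandle is graphic if and only if it is paragraphic. -/
import Mathlib

/-- A (right) rack: a set with a binary operation `mul` such that every right
translation `R_x : y ↦ y * x` is a bijection (with inverse given by the right
division `div`), satisfying right self-distributivity. -/
class RightRack (Q : Type*) where
  mul : Q → Q → Q
  div : Q → Q → Q
  div_mul : ∀ x y : Q, mul (div x y) y = x
  mul_div : ∀ x y : Q, div (mul x y) y = x
  self_distrib : ∀ x y z : Q, mul (mul x y) z = mul (mul x z) (mul y z)

namespace RightRack

/-- The right translation `R_x` as a permutation of `Q`. -/
def rt {Q : Type*} [RightRack Q] (x : Q) : Equiv.Perm Q where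
  toFun y := mul y x
  invFun y := div y x
  left_inv y := mul_div y x
  right_inv y := div_mul y x

/-- The right multiplication group `Rmlt(Q)`: the subgroup of the symmetric group
on `Q` generated by all right translations. -/
def rmlt (Q : Type*) [RightRack Q] : Subgroup (Equiv.Perm Q) :=
  Subgroup.closure (Set.range (rt : Q → Equiv.Perm Q))

end RightRack

/-- A quandle: an idempotent rack. -/
class RightQuandle (Q : Type*) extends RightRack Q where
  idem : ∀ x : Q, mul x x = x

/-- In a quandle, `(x*y)*x = x*(y*x)`. -/
lemma quandle_key {Q : Type*} [RightQuandle Q] (x y : Q) :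
    RightRack.mul (RightRack.mul x y) x = RightRack.mul x (RightRack.mul y x) := by
  rw [RightRack.self_distrib, RightQuandle.idem]

/-- A quandle is graphic (`(x*y)*x = x*y`) if and only if it is paragraphic
(`x*(y*x) = x*y`). -/
theorem quandle_graphic_iff_paragraphic {Q : Type*} [RightQuandle Q] :
    (∀ x y : Q, RightRack.mul (RightRack.mul x y) x = RightRack.mul x y) ↔
      (∀ x y : Q, RightRack.mul x (RightRack.mul y x) = RightRack.mul x y) := by
  constructor <;> intro h x y
  · rw [← quandle_key, h]
  · rw [quandle_key, h]
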